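/- Assume (L+1)² ≤ n, and let g be the vertex congestion of 𝒫. Then for every vertex v ∈ V and every finite set 𝒵 of pairs (x, b) with b ∈ {0,1} and x ∈ {1} × [n]^L good: Σ_{P_1 ∈ 𝒵} Σ_{P_2 ∈ 𝒵} r_v(P_1, P_2) ≤ 6·g·n^L·|𝒵|. -/

import Mathlib

open Finset

variable {n L : ℕ}

open Fin.NatCast in
/-- The segment of the staircase between milestones `x i` and `x (i+1)` (`0`-based `i`),
namely the path `P^{x_i, x_{i+1}}` of the all-pairs set of paths `P`. -/
def seg (P : Fin n → Fin n → List (Fin n)) (x : Fin (L + 1) → Fin n) (i : ℕ) :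
    List (Fin n) :=
  P (x i) (x (i + 1))

/-- The staircase `S_x` induced by the milestone sequence `x` and the all-pairs set of
paths `P`: the concatenation `P^{x_1,x_2} ∘ P^{x_2,x_3} ∘ ⋯ ∘ P^{x_L,x_{L+1}}` (as a walk;
each path after the first contributes everything but its first vertex). -/
def staircase (P : Fin n → Fin n → List (Fin n)) (x : Fin (L + 1) → Fin n) :
    List (Fin n) :=
  x 0 :: ((List.range L).flatMap fun i => (seg P x i).tail)

/-- The largest (`0`-based) segment index whose path contains `v`. -/
def segIdx (P : Fin n → Fin n → List (Fin n)) (x : Fin (L + 1) → Fin n) (v : Fin n) : ℕ :=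
  ((Finset.range L).filter fun i => v ∈ seg P x i).sup id

/-- The value function `f_x`: `f_x v = dist(v, 1)` if `v` is not on the staircase `S_x`,
and `f_x v = −(i·n + j)` if `v` is on `S_x`, where `i` is the maximum (1-based) index with
`v ∈ P^{x_i,x_{i+1}}` and `v` is the `j`-th vertex of `P^{x_i,x_{i+1}}`. -/
noncomputable def fx (G : SimpleGraph (Fin n)) (P : Fin n → Fin n → List (Fin n))
    (v₁ : Fin n) (x : Fin (L + 1) → Fin n) (v : Fin n) : ℤ :=
  if v ∈ staircase P x then
    -(((segIdx P x v : ℤ) + 1) * (n : ℤ) + (((seg P x (segIdx P x v)).idxOf v : ℤ) + 1))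
  else (G.dist v v₁ : ℤ)

/-- The function `g_{x,b}`, hiding the bit `b` at the last milestone `x_{L+1}` (second
component `b ∈ {0,1}` there, `−1` elsewhere). -/
noncomputable def gx (G : SimpleGraph (Fin n)) (P : Fin n → Fin n → List (Fin n))
    (v₁ : Fin n) (x : Fin (L + 1) → Fin n) (b : Bool) (v : Fin n) : ℤ × ℤ :=
  (fx G P v₁ x v, if v = x (Fin.last L) then (if b then 1 else 0) else -1)

/-- The maximum (1-based) index `j` such that `(x_1, …, x_j) = (y_1, …, y_j)`. -/
def maxPrefix (x y : Fin (L + 1) → Fin n) : ℕ :=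
  ((Finset.Icc 1 (L + 1)).filter fun j => ∀ i : Fin (L + 1), (i : ℕ) < j → x i = y i).sup id

/-- The relation `r`: zero if the bits agree or either sequence is not good (injective),
and `n ^ maxPrefix` otherwise. -/
noncomputable def rrel (p q : (Fin (L + 1) → Fin n) × Bool) : ℝ :=
  if p.2 = q.2 ∨ ¬ Function.Injective p.1 ∨ ¬ Function.Injective q.1 then 0
  else (n : ℝ) ^ maxPrefix p.1 q.1

/-- The relation `r_v`: equal to `r` if `g_{x,b₁}(v) ≠ g_{y,b₂}(v)` and `0` otherwise. -/
noncomputable def rv (G : SimpleGraph (Fin n)) (P : Fin n → Fin n → List (Fin n))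
    (v₁ v : Fin n) (p q : (Fin (L + 1) → Fin n) × Bool) : ℝ :=
  if gx G P v₁ p.1 p.2 v ≠ gx G P v₁ q.1 q.2 v then rrel p q else 0

/-- The relation `r̃_v`: equal to `r_v` if `μ(S_x, v) ≤ μ(S_y, v)` and `0` otherwise. -/
noncomputable def rvt (G : SimpleGraph (Fin n)) (P : Fin n → Fin n → List (Fin n))
    (v₁ v : Fin n) (p q : (Fin (L + 1) → Fin n) × Bool) : ℝ :=
  if (staircase P p.1).count v ≤ (staircase P q.1).count v then rv G P v₁ v p q else 0

open Fin.NatCast in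
/-- `Tail(j, S_x)` for a 1-based index `j ∈ [L]`: the walk
`P^{x_j,x_{j+1}} ∘ ⋯ ∘ P^{x_L,x_{L+1}}` with the first occurrence of `x_j` removed.
For `j = L + 1` it is the empty sequence. -/
def tailWalk (P : Fin n → Fin n → List (Fin n)) (x : Fin (L + 1) → Fin n) (j : ℕ) :
    List (Fin n) :=
  if j ≤ L then
    (seg P x (j - 1) ++ ((List.range L).drop j).flatMap fun i => (seg P x i).tail).erase
      (x (j - 1))
  else []

/-- The vertex congestion of the all-pairs set of paths `P`:
`max_{w} Σ_{u,v} (number of occurrences of w on P^{u,v})`. -/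
def congestion (P : Fin n → Fin n → List (Fin n)) : ℕ :=
  Finset.univ.sup fun w => ∑ u : Fin n, ∑ v : Fin n, (P u v).count w

/-- `N_v(u)`: the number of paths in `P` that start at `u` and contain `v`. -/
def Npaths (P : Fin n → Fin n → List (Fin n)) (v u : Fin n) : ℕ :=
  (Finset.univ.filter fun w => v ∈ P u w).card

section
open Fin.NatCast

lemma nat_sup_mem {s : Finset ℕ} (h : s.Nonempty) : s.sup id ∈ s := by
  obtain ⟨b, hb, he⟩ := Finset.exists_mem_eq_sup s h id
  rw [he]; exact hb

lemma val_fcast {i : ℕ} (h : i ≤ L) : (((i : ℕ) : Fin (L + 1)) : ℕ) = i :=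
  Fin.val_cast_of_lt (by omega)

lemma fcast_inj {i j : ℕ} (hi : i ≤ L) (hj : j ≤ L) (h : ((i : ℕ) : Fin (L+1)) = j) : i = j := by
  have := congrArg Fin.val h
  rwa [val_fcast hi, val_fcast hj] at this

lemma maxPrefix_le (x y : Fin (L+1) → Fin n) : maxPrefix x y ≤ L + 1 := by
  apply Finset.sup_le
  intro j hj
  have := (Finset.mem_filter.1 hj).1
  simpa using (Finset.mem_Icc.1 this).2

lemma maxPrefix_comm (x y : Fin (L+1) → Fin n) : maxPrefix x y = maxPrefix y x := by
  unfold maxPrefix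
  congr 1
  apply Finset.filter_congr
  intro j _
  exact ⟨fun h i hi => (h i hi).symm, fun h i hi => (h i hi).symm⟩

lemma one_le_maxPrefix {x y : Fin (L+1) → Fin n} (h : x 0 = y 0) : 1 ≤ maxPrefix x y := by
  apply Finset.le_sup (f := id) (b := 1)
  refine Finset.mem_filter.2 ⟨by simp, ?_⟩
  intro i hi
  have : i = 0 := by
    apply Fin.ext
    simpa using hi
  rwa [this]

lemma maxPrefix_agree {x y : Fin (L+1) → Fin n} (h : x 0 = y 0) :
    ∀ i : Fin (L+1), (i : ℕ) < maxPrefix x y → x i = y i := by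
  have hne : (((Finset.Icc 1 (L + 1)).filter fun j => ∀ i : Fin (L + 1), (i : ℕ) < j → x i = y i)).Nonempty := by
    refine ⟨1, Finset.mem_filter.2 ⟨by simp, ?_⟩⟩
    intro i hi
    have : i = 0 := by apply Fin.ext; simpa using hi
    rwa [this]
  have := nat_sup_mem hne
  exact (Finset.mem_filter.1 this).2

lemma eq_of_maxPrefix_eq {x y : Fin (L+1) → Fin n} (h : x 0 = y 0)
    (hm : L + 1 ≤ maxPrefix x y) : x = y := by
  funext i
  exact maxPrefix_agree h i (lt_of_lt_of_le i.isLt hm)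

lemma ne_of_maxPrefix_le {x y : Fin (L+1) → Fin n} (h : x 0 = y 0)
    (hm : maxPrefix x y ≤ L) : x ((maxPrefix x y : ℕ) : Fin (L+1)) ≠ y ((maxPrefix x y : ℕ) : Fin (L+1)) := by
  intro he
  set j := maxPrefix x y with hj
  have h1 : 1 ≤ j := one_le_maxPrefix h
  have : j + 1 ≤ j := by
    apply Finset.le_sup (f := id) (b := j + 1)
    refine Finset.mem_filter.2 ⟨Finset.mem_Icc.2 ⟨by omega, by omega⟩, ?_⟩
    intro i hi
    rcases Nat.lt_or_ge (i : ℕ) j with hlt | hge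
    · exact maxPrefix_agree h i hlt
    · have hij : (i : ℕ) = j := by omega
      have : i = ((j : ℕ) : Fin (L+1)) := by
        apply Fin.ext
        rw [val_fcast hm, ← hij]
      rw [this]; exact he
  omega


lemma fin_cast_succ (i : ℕ) : ((i + 1 : ℕ) : Fin (L + 1)) = (i : Fin (L + 1)) + 1 := by
  push_cast
  ring

lemma seg_def (P : Fin n → Fin n → List (Fin n)) (x : Fin (L + 1) → Fin n) (i : ℕ) :
    seg P x i = P (x i) (x ((i + 1 : ℕ))) := by
  rw [seg, fin_cast_succ]

lemma seg_eq_cons (P : Fin n → Fin n → List (Fin n)) (hhead : ∀ u v, (P u v).head? = some u)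
    (x : Fin (L+1) → Fin n) (i : ℕ) : seg P x i = x i :: (seg P x i).tail := by
  conv_lhs => rw [seg_def]
  rw [seg_def]
  exact (List.cons_head?_tail (hhead _ _)).symm

lemma last_mem_tail (P : Fin n → Fin n → List (Fin n)) (hhead : ∀ u v, (P u v).head? = some u)
    (hlast : ∀ u v, (P u v).getLast? = some v)
    (x : Fin (L+1) → Fin n) (i : ℕ) (hne : x (i : ℕ) ≠ x ((i + 1 : ℕ))) :
    x ((i + 1 : ℕ)) ∈ (seg P x i).tail := by
  have hcons := seg_eq_cons P hhead x i
  have hl : (seg P x i).getLast? = some (x ((i + 1 : ℕ))) := by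
    rw [seg_def]; exact hlast _ _
  rcases ht : (seg P x i).tail with _ | ⟨a, t⟩
  · rw [hcons, ht] at hl
    simp only [List.getLast?_singleton, Option.some.injEq] at hl
    exact absurd hl hne
  · rw [hcons, ht, List.getLast?_cons_cons] at hl
    exact List.mem_of_mem_getLast? (by simp [hl])

lemma mem_seg_iff (P : Fin n → Fin n → List (Fin n)) (hhead : ∀ u v, (P u v).head? = some u)
    (x : Fin (L+1) → Fin n) (i : ℕ) (v : Fin n) :
    v ∈ seg P x i ↔ v = x (i : ℕ) ∨ v ∈ (seg P x i).tail := by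
  conv_lhs => rw [seg_eq_cons P hhead x i]
  simp

lemma mem_staircase_iff (P : Fin n → Fin n → List (Fin n))
    (hhead : ∀ u v, (P u v).head? = some u) (hlast : ∀ u v, (P u v).getLast? = some v)
    (hL : 0 < L)
    (x : Fin (L+1) → Fin n) (hinj : Function.Injective x) (v : Fin n) :
    v ∈ staircase P x ↔ ∃ i, i < L ∧ v ∈ seg P x i := by
  have hnex : ∀ i : ℕ, i < L → x (i : ℕ) ≠ x ((i + 1 : ℕ)) := by
    intro i hi he
    have := hinj he
    exact absurd (fcast_inj (by omega) (by omega) this) (by omega)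
  constructor
  · intro hv
    simp only [staircase, List.mem_cons, List.mem_flatMap, List.mem_range] at hv
    rcases hv with hv | ⟨i, hi, hv⟩
    · refine ⟨0, hL, ?_⟩
      rw [mem_seg_iff P hhead]
      left
      exact_mod_cast hv
    · refine ⟨i, hi, ?_⟩
      rw [mem_seg_iff P hhead]
      right
      exact hv
  · rintro ⟨i, hi, hv⟩
    rw [mem_seg_iff P hhead] at hv
    simp only [staircase, List.mem_cons, List.mem_flatMap, List.mem_range]
    rcases hv with hv | hv
    · rcases Nat.eq_zero_or_pos i with rfl | hip
      · left
        exact_mod_cast hv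
      · right
        have h2 : (i - 1 + 1 : ℕ) = i := by omega
        refine ⟨i - 1, by omega, ?_⟩
        rw [← h2] at hv
        exact hv ▸ last_mem_tail P hhead hlast x (i-1) (hnex (i-1) (by omega))
    · right
      exact ⟨i, hi, hv⟩
lemma claim_tail (hL : 0 < L)
    (G : SimpleGraph (Fin n)) (P : Fin n → Fin n → List (Fin n))
    (hhead : ∀ u v, (P u v).head? = some u) (hlast : ∀ u v, (P u v).getLast? = some v)
    (v₁ v : Fin n)
    (x y : Fin (L+1) → Fin n) (b₁ b₂ : Bool)
    (hxinj : Function.Injective x) (hyinj : Function.Injective y)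
    (h0 : x 0 = y 0)
    (hjL : maxPrefix x y ≤ L)
    (hcount : (staircase P x).count v ≤ (staircase P y).count v)
    (hg : gx G P v₁ x b₁ v ≠ gx G P v₁ y b₂ v) :
    ∃ i, maxPrefix x y - 1 ≤ i ∧ i < L ∧ v ∈ seg P y i := by
  by_contra hcon
  push_neg at hcon
  set j := maxPrefix x y with hjdef
  have hj1 : 1 ≤ j := one_le_maxPrefix h0
  -- segments below j-1 agree
  have hseg : ∀ i : ℕ, i < j - 1 → seg P x i = seg P y i := by
    intro i hi
    rw [seg_def, seg_def,
      maxPrefix_agree h0 ((i : ℕ) : Fin (L+1)) (by rw [val_fcast (by omega)]; omega),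
      maxPrefix_agree h0 ((i + 1 : ℕ) : Fin (L+1)) (by rw [val_fcast (by omega)]; omega)]
  -- split the staircases
  have hrange : List.range L = List.range (j-1) ++ (List.range (L-(j-1))).map ((j-1) + ·) := by
    rw [← List.range_add]
    congr 1
    omega
  have hsplit : ∀ z : Fin (L+1) → Fin n, staircase P z =
      z 0 :: (((List.range (j-1)).flatMap fun i => (seg P z i).tail) ++
        ((List.range (L-(j-1))).flatMap fun k => (seg P z ((j-1) + k)).tail)) := by
    intro z
    rw [staircase, hrange, List.flatMap_append, List.flatMap_map]
  have hA : ((List.range (j-1)).flatMap fun i => (seg P x i).tail) =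
      ((List.range (j-1)).flatMap fun i => (seg P y i).tail) := by
    apply List.flatMap_congr
    intro a ha
    rw [hseg a (by simpa using ha)]
  have hBy : v ∉ ((List.range (L-(j-1))).flatMap fun k => (seg P y ((j-1) + k)).tail) := by
    intro hmem
    obtain ⟨k, hk, hv⟩ := List.mem_flatMap.1 hmem
    rw [List.mem_range] at hk
    refine hcon ((j-1) + k) (by omega) (by omega) ?_
    rw [seg_eq_cons P hhead]
    exact List.mem_cons_of_mem _ hv
  have hBx : v ∉ ((List.range (L-(j-1))).flatMap fun k => (seg P x ((j-1) + k)).tail) := by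
    rw [hsplit x, hsplit y, h0, hA] at hcount
    simp only [List.count_cons, List.count_append] at hcount
    have h1 : ((List.range (L-(j-1))).flatMap fun k => (seg P y ((j-1) + k)).tail).count v = 0 :=
      List.count_eq_zero.2 hBy
    have h2 : ((List.range (L-(j-1))).flatMap fun k => (seg P x ((j-1) + k)).tail).count v = 0 := by
      omega
    exact List.count_eq_zero.1 h2
  have hxtail : ∀ i : ℕ, j - 1 ≤ i → i < L → v ∉ (seg P x i).tail := by
    intro i h1 h2 hv
    apply hBx
    refine List.mem_flatMap.2 ⟨i - (j-1), List.mem_range.2 (by omega), ?_⟩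
    rw [show (j-1) + (i-(j-1)) = i by omega]
    exact hv
  have hxseg : ∀ i : ℕ, j - 1 ≤ i → i < L → v ∉ seg P x i := by
    intro i h1 h2 hv
    rw [mem_seg_iff P hhead] at hv
    rcases hv with hv | hv
    · rcases eq_or_lt_of_le h1 with heq | hlt
      · -- i = j - 1 : v = x (j-1) = y (j-1) ∈ seg y (j-1)
        refine hcon (j-1) le_rfl (by omega) ?_
        rw [mem_seg_iff P hhead]
        left
        rw [hv, ← heq]
        exact maxPrefix_agree h0 _ (by rw [val_fcast (by omega)]; omega)
      · -- j ≤ i : v = x i = last of seg (i-1)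
        have hne : x ((i-1 : ℕ)) ≠ x ((i-1+1 : ℕ)) := by
          intro he
          exact absurd (fcast_inj (by omega) (by omega) (hxinj he)) (by omega)
        refine hxtail (i-1) (by omega) (by omega) ?_
        have := last_mem_tail P hhead hlast x (i-1) hne
        rw [show i - 1 + 1 = i by omega] at this
        exact hv ▸ this
    · exact hxtail i h1 h2 hv
  -- v is not the last milestone of either sequence
  have hlastcast : (Fin.last L : Fin (L+1)) = ((L : ℕ) : Fin (L+1)) := by
    apply Fin.ext
    rw [val_fcast le_rfl]
    rfl
  have hvxL : v ≠ x (Fin.last L) := by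
    intro he
    have hne : x ((L-1 : ℕ)) ≠ x ((L-1+1 : ℕ)) := by
      intro h
      exact absurd (fcast_inj (by omega) (by omega) (hxinj h)) (by omega)
    refine hxtail (L-1) (by omega) (by omega) ?_
    have := last_mem_tail P hhead hlast x (L-1) hne
    rw [show L - 1 + 1 = L by omega] at this
    rw [he, hlastcast]
    exact this
  have hvyL : v ≠ y (Fin.last L) := by
    intro he
    refine hcon (L-1) (by omega) (by omega) ?_
    have hne : y ((L-1 : ℕ)) ≠ y ((L-1+1 : ℕ)) := by
      intro h
      exact absurd (fcast_inj (by omega) (by omega) (hyinj h)) (by omega)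
    have := last_mem_tail P hhead hlast y (L-1) hne
    rw [show L - 1 + 1 = L by omega] at this
    rw [seg_eq_cons P hhead]
    refine List.mem_cons_of_mem _ ?_
    rw [he, hlastcast]
    exact this
  -- the filters coincide
  have hFil : ((Finset.range L).filter fun i => v ∈ seg P x i) =
      ((Finset.range L).filter fun i => v ∈ seg P y i) := by
    ext i
    simp only [Finset.mem_filter, Finset.mem_range]
    constructor
    · rintro ⟨hi, hv⟩
      rcases Nat.lt_or_ge i (j-1) with hlt | hge
      · exact ⟨hi, (hseg i hlt) ▸ hv⟩
      · exact absurd hv (hxseg i hge hi)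
    · rintro ⟨hi, hv⟩
      rcases Nat.lt_or_ge i (j-1) with hlt | hge
      · exact ⟨hi, (hseg i hlt) ▸ hv⟩
      · exact absurd hv (hcon i hge hi)
  have hmemiff : v ∈ staircase P x ↔ v ∈ staircase P y := by
    rw [mem_staircase_iff P hhead hlast hL x hxinj, mem_staircase_iff P hhead hlast hL y hyinj]
    constructor
    · rintro ⟨i, hi, hv⟩
      have : i ∈ (Finset.range L).filter fun i => v ∈ seg P y i := by
        rw [← hFil]
        exact Finset.mem_filter.2 ⟨Finset.mem_range.2 hi, hv⟩
      simp only [Finset.mem_filter, Finset.mem_range] at this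
      exact ⟨i, this.1, this.2⟩
    · rintro ⟨i, hi, hv⟩
      have : i ∈ (Finset.range L).filter fun i => v ∈ seg P x i := by
        rw [hFil]
        exact Finset.mem_filter.2 ⟨Finset.mem_range.2 hi, hv⟩
      simp only [Finset.mem_filter, Finset.mem_range] at this
      exact ⟨i, this.1, this.2⟩
  -- fx equal
  have hfx : fx G P v₁ x v = fx G P v₁ y v := by
    by_cases hvx : v ∈ staircase P x
    · have hvy : v ∈ staircase P y := hmemiff.1 hvx
      rw [fx, fx, if_pos hvx, if_pos hvy]
      have hsi : segIdx P x v = segIdx P y v := by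
        unfold segIdx
        rw [hFil]
      have hlt : segIdx P x v < j - 1 := by
        obtain ⟨i, hi, hv⟩ := (mem_staircase_iff P hhead hlast hL x hxinj v).1 hvx
        have hnemp : (((Finset.range L).filter fun i => v ∈ seg P x i)).Nonempty :=
          ⟨i, Finset.mem_filter.2 ⟨Finset.mem_range.2 hi, hv⟩⟩
        have hmem := nat_sup_mem hnemp
        simp only [Finset.mem_filter, Finset.mem_range] at hmem
        by_contra hge
        unfold segIdx at hge
        exact hxseg _ (by omega) hmem.1 hmem.2
      rw [hsi, hseg _ (hsi ▸ hlt)]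
    · have hvy : v ∉ staircase P y := fun h => hvx (hmemiff.2 h)
      rw [fx, fx, if_neg hvx, if_neg hvy]
  exact hg (by rw [gx, gx, hfx, if_neg hvxL, if_neg hvyL])
lemma sum_sum_count_le (P : Fin n → Fin n → List (Fin n)) (v : Fin n) :
    ∑ u : Fin n, ∑ w : Fin n, (P u w).count v ≤ congestion P := by
  rw [congestion]
  exact Finset.le_sup (f := fun w => ∑ u : Fin n, ∑ v : Fin n, (P u v).count w)
    (Finset.mem_univ v)

lemma pairs_card_le (P : Fin n → Fin n → List (Fin n)) (v : Fin n) :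
    ((Finset.univ ×ˢ Finset.univ).filter fun uw : Fin n × Fin n => v ∈ P uw.1 uw.2).card ≤
      congestion P := by
  refine le_trans ?_ (sum_sum_count_le P v)
  rw [Finset.card_filter, ← Finset.sum_product' (f := fun u w => (P u w).count v)]
  apply Finset.sum_le_sum
  rintro ⟨u, w⟩ _
  split_ifs with h
  · exact List.count_pos_iff.2 h
  · exact Nat.zero_le _

lemma sum_Npaths_le (P : Fin n → Fin n → List (Fin n)) (v : Fin n) :
    ∑ u : Fin n, Npaths P v u ≤ congestion P := by
  refine le_trans ?_ (sum_sum_count_le P v)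
  apply Finset.sum_le_sum
  intro u _
  rw [Npaths, Finset.card_filter]
  apply Finset.sum_le_sum
  intro w _
  split_ifs with h
  · exact List.count_pos_iff.2 h
  · exact Nat.zero_le _

lemma n_le_congestion (P : Fin n → Fin n → List (Fin n))
    (hhead : ∀ u v, (P u v).head? = some u) (v : Fin n) : n ≤ congestion P := by
  refine le_trans ?_ (sum_sum_count_le P v)
  have h1 : ∀ w : Fin n, 1 ≤ (P v w).count v := by
    intro w
    apply List.count_pos_iff.2
    rw [← List.cons_head?_tail (hhead v w)]
    exact List.mem_cons_self
  calc n = ∑ _w : Fin n, 1 := by simp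
  _ ≤ ∑ w : Fin n, (P v w).count v := Finset.sum_le_sum fun w _ => h1 w
  _ ≤ ∑ u : Fin n, ∑ w : Fin n, (P u w).count v :=
      Finset.single_le_sum (f := fun u => ∑ w : Fin n, (P u w).count v)
        (fun _ _ => Nat.zero_le _) (Finset.mem_univ v)

lemma sum_Npaths_x_le (P : Fin n → Fin n → List (Fin n)) (v : Fin n)
    (x : Fin (L+1) → Fin n) (hxinj : Function.Injective x) :
    ∑ j ∈ Finset.range L, Npaths P v (x (j : ℕ)) ≤ congestion P := by
  refine le_trans ?_ (sum_Npaths_le P v)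
  have hinj : ∀ a ∈ Finset.range L, ∀ b ∈ Finset.range L,
      x ((a : ℕ) : Fin (L+1)) = x ((b : ℕ) : Fin (L+1)) → a = b := by
    intro a ha b hb hab
    rw [Finset.mem_range] at ha hb
    exact fcast_inj (by omega) (by omega) (hxinj hab)
  have himg : ∑ u ∈ (Finset.range L).image (fun j : ℕ => x ((j : ℕ) : Fin (L+1))),
      Npaths P v u = ∑ j ∈ Finset.range L, Npaths P v (x ((j : ℕ) : Fin (L+1))) :=
    Finset.sum_image hinj
  rw [← himg]
  exact Finset.sum_le_sum_of_subset (Finset.subset_univ _)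

-- helper for cardinalities of coordinate filters
lemma card_filter_cond (j : ℕ) (hj : j ≤ L + 1) (T : Finset (Fin (L+1)))
    (hT : ∀ k ∈ T, j ≤ (k : ℕ)) :
    (Finset.univ.filter fun k : Fin (L+1) => (k : ℕ) < j ∨ k ∈ T).card = j + T.card := by
  have hU : (Finset.univ.filter fun k : Fin (L+1) => (k : ℕ) < j ∨ k ∈ T) =
      ((Finset.range j).image fun m : ℕ => ((m : ℕ) : Fin (L+1))) ∪ T := by
    ext k
    simp only [Finset.mem_filter, Finset.mem_univ, true_and, Finset.mem_union,
      Finset.mem_image, Finset.mem_range]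
    constructor
    · rintro (hk | hk)
      · exact Or.inl ⟨(k : ℕ), hk, Fin.cast_val_eq_self k⟩
      · exact Or.inr hk
    · rintro (⟨m, hm, rfl⟩ | hk)
      · left
        rw [val_fcast (by omega)]
        exact hm
      · right
        exact hk
  rw [hU, Finset.card_union_of_disjoint, Finset.card_image_of_injOn, Finset.card_range]
  · intro a ha b hb hab
    rw [Finset.mem_coe, Finset.mem_range] at ha hb
    exact fcast_inj (by omega) (by omega) hab
  · rw [Finset.disjoint_left]
    rintro k hk hk2
    obtain ⟨m, hm, rfl⟩ := Finset.mem_image.1 hk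
    rw [Finset.mem_range] at hm
    have := hT _ hk2
    rw [val_fcast (by omega)] at this
    omega

lemma card_piFinset_cond (c : Fin (L+1) → Finset (Fin n)) (cond : Fin (L+1) → Prop)
    [DecidablePred cond] (h : ∀ k, (c k).card = if cond k then 1 else n) :
    (Fintype.piFinset c).card = n ^ (Finset.univ.filter fun k => ¬ cond k).card := by
  rw [Fintype.card_piFinset]
  calc ∏ k, (c k).card = ∏ k, (if cond k then 1 else n) := Finset.prod_congr rfl fun k _ => h k
  _ = (∏ k ∈ Finset.univ.filter cond, (if cond k then 1 else n)) *
        ∏ k ∈ Finset.univ.filter (fun k => ¬ cond k), (if cond k then 1 else n) :=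
      (Finset.prod_filter_mul_prod_filter_not _ _ _).symm
  _ = n ^ (Finset.univ.filter fun k => ¬ cond k).card := by
      rw [Finset.prod_ite_of_true (h := fun k hk => (Finset.mem_filter.1 hk).2),
        Finset.prod_ite_of_false (h := fun k hk => (Finset.mem_filter.1 hk).2)]
      simp [Finset.prod_const]
lemma card_Z_pair (P : Fin n → Fin n → List (Fin n)) (v : Fin n)
    (x : Fin (L+1) → Fin n) (j i : ℕ) (hj1 : 1 ≤ j) (hji : j ≤ i) (hiL : i < L) :
    (Finset.univ.filter fun y : Fin (L+1) → Fin n =>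
       (∀ k : Fin (L+1), (k : ℕ) < j → y k = x k) ∧ v ∈ seg P y i).card ≤
      ((Finset.univ ×ˢ Finset.univ).filter fun uw : Fin n × Fin n => v ∈ P uw.1 uw.2).card *
        n ^ (L - 1 - j) := by
  classical
  set S := (Finset.univ ×ˢ Finset.univ).filter fun uw : Fin n × Fin n => v ∈ P uw.1 uw.2 with hS
  set T : Finset (Fin (L+1)) := {((i : ℕ) : Fin (L+1)), ((i+1 : ℕ) : Fin (L+1))} with hT
  set E : Fin n × Fin n → Finset (Fin (L+1) → Fin n) := fun uw =>
    Fintype.piFinset fun k : Fin (L+1) =>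
      if (k : ℕ) < j then {x k} else if k = ((i : ℕ) : Fin (L+1)) then {uw.1}
      else if k = ((i+1 : ℕ) : Fin (L+1)) then {uw.2} else Finset.univ with hE
  have hsub : (Finset.univ.filter fun y : Fin (L+1) → Fin n =>
      (∀ k : Fin (L+1), (k : ℕ) < j → y k = x k) ∧ v ∈ seg P y i) ⊆ S.biUnion E := by
    intro y hy
    rw [Finset.mem_filter] at hy
    obtain ⟨-, hpre, hvseg⟩ := hy
    rw [seg_def] at hvseg
    refine Finset.mem_biUnion.2 ⟨(y ((i : ℕ) : Fin (L+1)), y ((i+1 : ℕ) : Fin (L+1))), ?_, ?_⟩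
    · rw [hS, Finset.mem_filter]
      exact ⟨Finset.mem_product.2 ⟨Finset.mem_univ _, Finset.mem_univ _⟩, hvseg⟩
    · rw [hE]
      refine Fintype.mem_piFinset.2 fun k => ?_
      split_ifs with h1 h2 h3
      · exact Finset.mem_singleton.2 (hpre k h1)
      · exact Finset.mem_singleton.2 (by rw [h2])
      · exact Finset.mem_singleton.2 (by rw [h3])
      · exact Finset.mem_univ _
  have hTcard : T.card = 2 := by
    rw [hT, Finset.card_insert_of_notMem, Finset.card_singleton]
    simp only [Finset.mem_singleton]
    intro h
    exact absurd (fcast_inj (by omega) (by omega) h) (by omega)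
  have hTval : ∀ k ∈ T, j ≤ (k : ℕ) := by
    intro k hk
    rw [hT] at hk
    simp only [Finset.mem_insert, Finset.mem_singleton] at hk
    rcases hk with rfl | rfl
    · rw [val_fcast (by omega)]; omega
    · rw [val_fcast (by omega)]; omega
  have hcard : ∀ uw : Fin n × Fin n, (E uw).card = n ^ (L - 1 - j) := by
    intro uw
    rw [hE]
    have hco := card_piFinset_cond (n := n)
      (fun k : Fin (L+1) =>
        if (k : ℕ) < j then ({x k} : Finset (Fin n)) else if k = ((i : ℕ) : Fin (L+1)) then {uw.1}
        else if k = ((i+1 : ℕ) : Fin (L+1)) then {uw.2} else Finset.univ)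
      (fun k : Fin (L+1) => (k : ℕ) < j ∨ k ∈ T) ?_
    · have h5 := card_filter_cond j (by omega) T hTval
      rw [hTcard] at h5
      have h6 := Finset.card_filter_add_card_filter_not
        (s := (Finset.univ : Finset (Fin (L+1)))) (p := fun k : Fin (L+1) => (k : ℕ) < j ∨ k ∈ T)
      rw [Finset.card_univ, Fintype.card_fin] at h6
      have h4 : (Finset.univ.filter fun k : Fin (L+1) => ¬((k : ℕ) < j ∨ k ∈ T)).card =
          L - 1 - j := by omega
      rw [hco, h4]
    · intro k
      by_cases h1 : (k : ℕ) < j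
      · rw [if_pos h1, if_pos (Or.inl h1), Finset.card_singleton]
      · by_cases h2 : k = ((i : ℕ) : Fin (L+1))
        · rw [if_neg h1, if_pos h2, if_pos (Or.inr (by rw [h2, hT]; exact Finset.mem_insert_self _ _)),
            Finset.card_singleton]
        · by_cases h3 : k = ((i+1 : ℕ) : Fin (L+1))
          · rw [if_neg h1, if_neg h2, if_pos h3,
              if_pos (Or.inr (by rw [h3, hT]; exact Finset.mem_insert_of_mem (Finset.mem_singleton_self _))),
              Finset.card_singleton]
          · rw [if_neg h1, if_neg h2, if_neg h3, if_neg ?_, Finset.card_univ, Fintype.card_fin]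
            rintro (hc | hc)
            · exact h1 hc
            · rw [hT] at hc
              simp only [Finset.mem_insert, Finset.mem_singleton] at hc
              tauto
  calc (Finset.univ.filter fun y : Fin (L+1) → Fin n =>
      (∀ k : Fin (L+1), (k : ℕ) < j → y k = x k) ∧ v ∈ seg P y i).card
      ≤ (S.biUnion E).card := Finset.card_le_card hsub
  _ ≤ ∑ uw ∈ S, (E uw).card := Finset.card_biUnion_le
  _ = ∑ _uw ∈ S, n ^ (L - 1 - j) := Finset.sum_congr rfl fun uw _ => hcard uw
  _ = S.card * n ^ (L - 1 - j) := by rw [Finset.sum_const, smul_eq_mul]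

lemma card_Z_single (P : Fin n → Fin n → List (Fin n)) (v : Fin n)
    (x : Fin (L+1) → Fin n) (j : ℕ) (hj1 : 1 ≤ j) (hjL : j ≤ L) :
    (Finset.univ.filter fun y : Fin (L+1) → Fin n =>
       (∀ k : Fin (L+1), (k : ℕ) < j → y k = x k) ∧ v ∈ seg P y (j-1)).card ≤
      Npaths P v (x ((j-1 : ℕ) : Fin (L+1))) * n ^ (L - j) := by
  classical
  set S := Finset.univ.filter fun w : Fin n => v ∈ P (x ((j-1 : ℕ) : Fin (L+1))) w with hS
  set T : Finset (Fin (L+1)) := {((j : ℕ) : Fin (L+1))} with hT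
  set E : Fin n → Finset (Fin (L+1) → Fin n) := fun w =>
    Fintype.piFinset fun k : Fin (L+1) =>
      if (k : ℕ) < j then {x k} else if k = ((j : ℕ) : Fin (L+1)) then {w} else Finset.univ with hE
  have hsub : (Finset.univ.filter fun y : Fin (L+1) → Fin n =>
      (∀ k : Fin (L+1), (k : ℕ) < j → y k = x k) ∧ v ∈ seg P y (j-1)) ⊆ S.biUnion E := by
    intro y hy
    rw [Finset.mem_filter] at hy
    obtain ⟨-, hpre, hvseg⟩ := hy
    rw [seg_def] at hvseg
    rw [show j - 1 + 1 = j by omega] at hvseg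
    have hy1 : y ((j-1 : ℕ) : Fin (L+1)) = x ((j-1 : ℕ) : Fin (L+1)) :=
      hpre _ (by rw [val_fcast (by omega)]; omega)
    rw [hy1] at hvseg
    refine Finset.mem_biUnion.2 ⟨y ((j : ℕ) : Fin (L+1)), ?_, ?_⟩
    · rw [hS, Finset.mem_filter]
      exact ⟨Finset.mem_univ _, hvseg⟩
    · rw [hE]
      refine Fintype.mem_piFinset.2 fun k => ?_
      split_ifs with h1 h2
      · exact Finset.mem_singleton.2 (hpre k h1)
      · exact Finset.mem_singleton.2 (by rw [h2])
      · exact Finset.mem_univ _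
  have hTval : ∀ k ∈ T, j ≤ (k : ℕ) := by
    intro k hk
    rw [hT, Finset.mem_singleton] at hk
    rw [hk, val_fcast (by omega)]
  have hcard : ∀ w : Fin n, (E w).card = n ^ (L - j) := by
    intro w
    rw [hE]
    have hco := card_piFinset_cond (n := n)
      (fun k : Fin (L+1) =>
        if (k : ℕ) < j then ({x k} : Finset (Fin n)) else if k = ((j : ℕ) : Fin (L+1)) then {w}
        else Finset.univ)
      (fun k : Fin (L+1) => (k : ℕ) < j ∨ k ∈ T) ?_
    · have hTcard : T.card = 1 := by rw [hT]; exact Finset.card_singleton _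
      have h5 := card_filter_cond j (by omega) T hTval
      rw [hTcard] at h5
      have h6 := Finset.card_filter_add_card_filter_not
        (s := (Finset.univ : Finset (Fin (L+1)))) (p := fun k : Fin (L+1) => (k : ℕ) < j ∨ k ∈ T)
      rw [Finset.card_univ, Fintype.card_fin] at h6
      have h4 : (Finset.univ.filter fun k : Fin (L+1) => ¬((k : ℕ) < j ∨ k ∈ T)).card =
          L - j := by omega
      rw [hco, h4]
    · intro k
      by_cases h1 : (k : ℕ) < j
      · rw [if_pos h1, if_pos (Or.inl h1), Finset.card_singleton]
      · by_cases h2 : k = ((j : ℕ) : Fin (L+1))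
        · rw [if_neg h1, if_pos h2, if_pos (Or.inr (by rw [h2, hT]; exact Finset.mem_singleton_self _)),
            Finset.card_singleton]
        · rw [if_neg h1, if_neg h2, if_neg ?_, Finset.card_univ, Fintype.card_fin]
          rintro (hc | hc)
          · exact h1 hc
          · rw [hT, Finset.mem_singleton] at hc
            exact h2 hc
  have hScard : S.card = Npaths P v (x ((j-1 : ℕ) : Fin (L+1))) := rfl
  calc (Finset.univ.filter fun y : Fin (L+1) → Fin n =>
      (∀ k : Fin (L+1), (k : ℕ) < j → y k = x k) ∧ v ∈ seg P y (j-1)).card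
      ≤ (S.biUnion E).card := Finset.card_le_card hsub
  _ ≤ ∑ w ∈ S, (E w).card := Finset.card_biUnion_le
  _ = ∑ _w ∈ S, n ^ (L - j) := Finset.sum_congr rfl fun w _ => hcard w
  _ = S.card * n ^ (L - j) := by rw [Finset.sum_const, smul_eq_mul]
  _ = Npaths P v (x ((j-1 : ℕ) : Fin (L+1))) * n ^ (L - j) := by rw [hScard]
lemma rrel_nonneg (p q : (Fin (L + 1) → Fin n) × Bool) : 0 ≤ rrel p q := by
  rw [rrel]; split_ifs <;> positivity

lemma rv_nonneg (G : SimpleGraph (Fin n)) (P : Fin n → Fin n → List (Fin n))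
    (v₁ v : Fin n) (p q : (Fin (L + 1) → Fin n) × Bool) : 0 ≤ rv G P v₁ v p q := by
  rw [rv]; split_ifs
  · exact rrel_nonneg p q
  · exact le_refl 0

lemma rvt_nonneg (G : SimpleGraph (Fin n)) (P : Fin n → Fin n → List (Fin n))
    (v₁ v : Fin n) (p q : (Fin (L + 1) → Fin n) × Bool) : 0 ≤ rvt G P v₁ v p q := by
  rw [rvt]; split_ifs
  · exact rv_nonneg G P v₁ v p q
  · exact le_refl 0

lemma bool_eq_of_ne {a b c : Bool} (h1 : a ≠ c) (h2 : b ≠ c) : a = b := by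
  cases a <;> cases b <;> cases c <;> simp_all

lemma rrel_comm (p q : (Fin (L + 1) → Fin n) × Bool) : rrel p q = rrel q p := by
  rw [rrel, rrel, maxPrefix_comm]
  refine if_congr ?_ rfl rfl
  constructor
  · rintro (h | h | h)
    · exact Or.inl h.symm
    · exact Or.inr (Or.inr h)
    · exact Or.inr (Or.inl h)
  · rintro (h | h | h)
    · exact Or.inl h.symm
    · exact Or.inr (Or.inr h)
    · exact Or.inr (Or.inl h)

lemma rv_comm (G : SimpleGraph (Fin n)) (P : Fin n → Fin n → List (Fin n))
    (v₁ v : Fin n) (p q : (Fin (L + 1) → Fin n) × Bool) :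
    rv G P v₁ v p q = rv G P v₁ v q p := by
  rw [rv, rv, rrel_comm]
  exact if_congr ne_comm rfl rfl

def condD (P : Fin n → Fin n → List (Fin n)) (v : Fin n) (x : Fin (L + 1) → Fin n)
    (b₁ : Bool) (j : ℕ) (q : (Fin (L + 1) → Fin n) × Bool) : Prop :=
  q.2 ≠ b₁ ∧ (∀ k : Fin (L + 1), (k : ℕ) < j → q.1 k = x k) ∧
    ∃ i, j - 1 ≤ i ∧ i < L ∧ v ∈ seg P q.1 i

def GamD (P : Fin n → Fin n → List (Fin n)) (v : Fin n) : ℕ :=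
  ((Finset.univ ×ˢ Finset.univ).filter fun uw : Fin n × Fin n => v ∈ P uw.1 uw.2).card

lemma key_bound (hn : 0 < n) (hL : 0 < L) (hLn : (L + 1) ^ 2 ≤ n)
    (G : SimpleGraph (Fin n)) (P : Fin n → Fin n → List (Fin n))
    (hhead : ∀ u v, (P u v).head? = some u)
    (hlast : ∀ u v, (P u v).getLast? = some v)
    (v v₁ : Fin n)
    (𝒵 : Finset ((Fin (L + 1) → Fin n) × Bool))
    (h𝒵 : ∀ p ∈ 𝒵, p.1 0 = v₁ ∧ Function.Injective p.1)
    (p : (Fin (L + 1) → Fin n) × Bool) (hp : p ∈ 𝒵) :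
    ∑ q ∈ 𝒵, rvt G P v₁ v p q ≤ 3 * (congestion P : ℝ) * (n : ℝ) ^ L := by
  classical
  obtain ⟨x, b₁⟩ := p
  obtain ⟨hx0, hxinj⟩ := h𝒵 _ hp
  dsimp only at hx0 hxinj
  have hcondD : ∀ j q, condD P v x b₁ j q ↔
      (q.2 ≠ b₁ ∧ (∀ k : Fin (L + 1), (k : ℕ) < j → q.1 k = x k) ∧
        ∃ i, j - 1 ≤ i ∧ i < L ∧ v ∈ seg P q.1 i) := fun j q => Iff.rfl
  -- pointwise bound
  have hpt : ∀ q ∈ 𝒵, rvt G P v₁ v (x, b₁) q ≤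
      (if q.1 = x ∧ q.2 ≠ b₁ then (n : ℝ) ^ (L + 1) else 0) +
        ∑ j ∈ Finset.Icc 1 L, (if condD P v x b₁ j q then (n : ℝ) ^ j else 0) := by
    intro q hq
    obtain ⟨hy0, hyinj⟩ := h𝒵 q hq
    by_cases hz : rvt G P v₁ v (x, b₁) q = 0
    · rw [hz]
      apply add_nonneg
      · split_ifs <;> positivity
      · exact Finset.sum_nonneg fun j _ => by split_ifs <;> positivity
    · have hcnt : (staircase P x).count v ≤ (staircase P q.1).count v := by
        by_contra h
        rw [rvt, if_neg h] at hz
        exact hz rfl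
      have hrvne : rv G P v₁ v (x, b₁) q ≠ 0 := by
        intro h
        rw [rvt, if_pos hcnt, h] at hz
        exact hz rfl
      have hgx : gx G P v₁ x b₁ v ≠ gx G P v₁ q.1 q.2 v := by
        by_contra h
        rw [rv, if_neg (not_not_intro h)] at hrvne
        exact hrvne rfl
      have hrrel : ¬(b₁ = q.2 ∨ ¬Function.Injective x ∨ ¬Function.Injective q.1) := by
        intro h
        apply hrvne
        rw [rv, if_pos hgx, rrel, if_pos h]
      have hval : rvt G P v₁ v (x, b₁) q = (n : ℝ) ^ maxPrefix x q.1 := by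
        rw [rvt, if_pos hcnt, rv, if_pos hgx, rrel, if_neg hrrel]
      have h0 : x 0 = q.1 0 := by rw [hx0, hy0]
      push_neg at hrrel
      rcases le_or_gt (maxPrefix x q.1) L with hml | hmg
      · obtain ⟨i, hi1, hi2, hi3⟩ := claim_tail hL G P hhead hlast v₁ v x q.1 b₁ q.2
          hxinj hyinj h0 hml hcnt hgx
        have hcondj : condD P v x b₁ (maxPrefix x q.1) q :=
          ⟨hrrel.1.symm, fun k hk => (maxPrefix_agree h0 k hk).symm, ⟨i, hi1, hi2, hi3⟩⟩
        rw [hval]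
        have hfst : (0 : ℝ) ≤ (if q.1 = x ∧ q.2 ≠ b₁ then (n : ℝ) ^ (L + 1) else 0) := by
          split_ifs <;> positivity
        have hle : (n : ℝ) ^ maxPrefix x q.1 ≤
            ∑ j ∈ Finset.Icc 1 L, (if condD P v x b₁ j q then (n : ℝ) ^ j else 0) := by
          have hsgl := Finset.single_le_sum
            (f := fun j => if condD P v x b₁ j q then (n : ℝ) ^ j else 0)
            (fun j _ => by split_ifs <;> positivity)
            (Finset.mem_Icc.2 ⟨one_le_maxPrefix h0, hml⟩)
          rwa [if_pos hcondj] at hsgl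
        linarith
      · have hm : maxPrefix x q.1 = L + 1 := le_antisymm (maxPrefix_le _ _) hmg
        have hxy : x = q.1 := eq_of_maxPrefix_eq h0 (by omega)
        rw [hval, hm, if_pos ⟨hxy.symm, hrrel.1.symm⟩]
        have : (0 : ℝ) ≤ ∑ j ∈ Finset.Icc 1 L, (if condD P v x b₁ j q then (n : ℝ) ^ j else 0) :=
          Finset.sum_nonneg fun j _ => by split_ifs <;> positivity
        linarith
  -- sum the pointwise bound
  have hstep : ∑ q ∈ 𝒵, rvt G P v₁ v (x, b₁) q ≤
      (n : ℝ) ^ (L + 1) +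
        ∑ j ∈ Finset.Icc 1 L, ((𝒵.filter (condD P v x b₁ j)).card : ℝ) * (n : ℝ) ^ j := by
    calc ∑ q ∈ 𝒵, rvt G P v₁ v (x, b₁) q
        ≤ ∑ q ∈ 𝒵, ((if q.1 = x ∧ q.2 ≠ b₁ then (n : ℝ) ^ (L + 1) else 0) +
            ∑ j ∈ Finset.Icc 1 L, (if condD P v x b₁ j q then (n : ℝ) ^ j else 0)) :=
          Finset.sum_le_sum hpt
    _ = (∑ q ∈ 𝒵, if q.1 = x ∧ q.2 ≠ b₁ then (n : ℝ) ^ (L + 1) else 0) +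
          ∑ j ∈ Finset.Icc 1 L, ∑ q ∈ 𝒵, (if condD P v x b₁ j q then (n : ℝ) ^ j else 0) := by
        rw [Finset.sum_add_distrib, Finset.sum_comm]
    _ ≤ (n : ℝ) ^ (L + 1) +
          ∑ j ∈ Finset.Icc 1 L, ((𝒵.filter (condD P v x b₁ j)).card : ℝ) * (n : ℝ) ^ j := by
        apply add_le_add
        · rw [← Finset.sum_filter]
          have hc1 : (𝒵.filter fun q => q.1 = x ∧ q.2 ≠ b₁).card ≤ 1 := by
            rw [Finset.card_le_one]
            intro a ha b hb
            rw [Finset.mem_filter] at ha hb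
            exact Prod.ext (ha.2.1.trans hb.2.1.symm) (bool_eq_of_ne ha.2.2 hb.2.2)
          rw [Finset.sum_const, nsmul_eq_mul]
          have := mul_le_mul_of_nonneg_right
            (show ((𝒵.filter fun q => q.1 = x ∧ q.2 ≠ b₁).card : ℝ) ≤ 1 by exact_mod_cast hc1)
            (show (0:ℝ) ≤ (n : ℝ) ^ (L + 1) by positivity)
          simpa using this
        · apply Finset.sum_le_sum
          intro j _
          rw [← Finset.sum_filter, Finset.sum_const, nsmul_eq_mul]
  -- counting bound per j
  have hcard_j : ∀ j, 1 ≤ j → j ≤ L → (𝒵.filter (condD P v x b₁ j)).card ≤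
      Npaths P v (x ((j - 1 : ℕ) : Fin (L+1))) * n ^ (L - j) + (L - j) * (GamD P v * n ^ (L - 1 - j)) := by
    intro j hj1 hjL
    have hjlt : j - 1 < L := by omega
    have hjeq : j - 1 + 1 = j := by omega
    have hstep1 : (𝒵.filter (condD P v x b₁ j)).card ≤
        (Finset.univ.filter fun y : Fin (L+1) → Fin n =>
          (∀ k : Fin (L+1), (k : ℕ) < j → y k = x k) ∧
            ∃ i, j - 1 ≤ i ∧ i < L ∧ v ∈ seg P y i).card := by
      apply Finset.card_le_card_of_injOn (fun q => q.1)
      · intro q hq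
        rw [Finset.mem_coe, Finset.mem_filter] at hq
        exact Finset.mem_coe.2 (Finset.mem_filter.2 ⟨Finset.mem_univ _, hq.2.2.1, hq.2.2.2⟩)
      · intro a ha b hb hab
        rw [Finset.mem_coe, Finset.mem_filter] at ha hb
        exact Prod.ext hab (bool_eq_of_ne ha.2.1 hb.2.1)
    have hstep2 : (Finset.univ.filter fun y : Fin (L+1) → Fin n =>
        (∀ k : Fin (L+1), (k : ℕ) < j → y k = x k) ∧
          ∃ i, j - 1 ≤ i ∧ i < L ∧ v ∈ seg P y i).card ≤
        ∑ i ∈ Finset.Ico (j-1) L, (Finset.univ.filter fun y : Fin (L+1) → Fin n =>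
        (∀ k : Fin (L+1), (k : ℕ) < j → y k = x k) ∧ v ∈ seg P y i).card := by
      refine le_trans (Finset.card_le_card ?_) Finset.card_biUnion_le
      intro y hy
      rw [Finset.mem_filter] at hy
      obtain ⟨-, hpre, i, hi1, hi2, hi3⟩ := hy
      exact Finset.mem_biUnion.2 ⟨i, Finset.mem_Ico.2 ⟨hi1, hi2⟩,
        Finset.mem_filter.2 ⟨Finset.mem_univ _, hpre, hi3⟩⟩
    have hstep3 : ∑ i ∈ Finset.Ico (j-1) L, (Finset.univ.filter fun y : Fin (L+1) → Fin n =>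
        (∀ k : Fin (L+1), (k : ℕ) < j → y k = x k) ∧ v ∈ seg P y i).card ≤
        Npaths P v (x ((j - 1 : ℕ) : Fin (L+1))) * n ^ (L - j) +
          (L - j) * (GamD P v * n ^ (L - 1 - j)) := by
      rw [Finset.sum_eq_sum_Ico_succ_bot hjlt]
      rw [hjeq]
      apply add_le_add
      · exact card_Z_single P v x j hj1 hjL
      · calc ∑ i ∈ Finset.Ico j L, (Finset.univ.filter fun y : Fin (L+1) → Fin n =>
        (∀ k : Fin (L+1), (k : ℕ) < j → y k = x k) ∧ v ∈ seg P y i).card ≤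
            ∑ _i ∈ Finset.Ico j L, GamD P v * n ^ (L - 1 - j) := by
              apply Finset.sum_le_sum
              intro i hi
              rw [Finset.mem_Ico] at hi
              exact card_Z_pair P v x j i hj1 hi.1 hi.2
        _ = (L - j) * (GamD P v * n ^ (L - 1 - j)) := by
            rw [Finset.sum_const, Nat.card_Ico, smul_eq_mul]
    exact le_trans hstep1 (le_trans hstep2 hstep3)
  -- assemble, in ℕ
  have hA : n ^ (L + 1) ≤ congestion P * n ^ L := by
    rw [pow_succ']
    exact Nat.mul_le_mul_right _ (n_le_congestion P hhead v)
  have hB : ∑ j ∈ Finset.Icc 1 L,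
      (Npaths P v (x ((j - 1 : ℕ) : Fin (L+1))) * n ^ (L - j) + (L - j) * (GamD P v * n ^ (L - 1 - j)))
        * n ^ j ≤ 2 * (congestion P * n ^ L) := by
    have hsplit : ∀ j ∈ Finset.Icc 1 L,
        (Npaths P v (x ((j - 1 : ℕ) : Fin (L+1))) * n ^ (L - j) +
          (L - j) * (GamD P v * n ^ (L - 1 - j))) * n ^ j ≤
        Npaths P v (x ((j - 1 : ℕ) : Fin (L+1))) * n ^ L + L * (GamD P v * n ^ (L - 1)) := by
      intro j hj
      rw [Finset.mem_Icc] at hj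
      rw [add_mul]
      apply add_le_add
      · rw [mul_assoc, ← pow_add, show L - j + j = L by omega]
      · rcases eq_or_lt_of_le hj.2 with heq | hjL
        · have hz0 : L - j = 0 := by omega
          rw [hz0]
          simp
        · have he : (L - j) * (GamD P v * n ^ (L - 1 - j)) * n ^ j = (L - j) * (GamD P v * n ^ (L - 1)) := by
            have h3 : (L - j) * (GamD P v * n ^ (L - 1 - j)) * n ^ j =
                (L - j) * (GamD P v * (n ^ (L - 1 - j) * n ^ j)) := by ring
            rw [h3, ← pow_add, show L - 1 - j + j = L - 1 by omega]
          rw [he]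
          exact Nat.mul_le_mul_right _ (by omega)
    calc ∑ j ∈ Finset.Icc 1 L,
        (Npaths P v (x ((j - 1 : ℕ) : Fin (L+1))) * n ^ (L - j) +
          (L - j) * (GamD P v * n ^ (L - 1 - j))) * n ^ j
        ≤ ∑ j ∈ Finset.Icc 1 L,
            (Npaths P v (x ((j - 1 : ℕ) : Fin (L+1))) * n ^ L + L * (GamD P v * n ^ (L - 1))) :=
          Finset.sum_le_sum hsplit
    _ = (∑ j ∈ Finset.Icc 1 L, Npaths P v (x ((j - 1 : ℕ) : Fin (L+1)))) * n ^ L +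
          L * (L * (GamD P v * n ^ (L - 1))) := by
        rw [Finset.sum_add_distrib, ← Finset.sum_mul, Finset.sum_const, Nat.card_Icc,
          Nat.add_sub_cancel, smul_eq_mul]
    _ ≤ congestion P * n ^ L + congestion P * n ^ L := by
        apply add_le_add
        · apply Nat.mul_le_mul_right
          calc ∑ j ∈ Finset.Icc 1 L, Npaths P v (x ((j - 1 : ℕ) : Fin (L+1)))
              = ∑ j ∈ Finset.range L, Npaths P v (x ((j : ℕ) : Fin (L+1))) := by
                rw [show Finset.Icc 1 L = Finset.Ico 1 (L+1) by rw [Finset.Ico_add_one_right_eq_Icc],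
                  Finset.sum_Ico_eq_sum_range, Nat.add_sub_cancel]
                exact Finset.sum_congr rfl fun j _ => by rw [show 1 + j - 1 = j by omega]
          _ ≤ congestion P := sum_Npaths_x_le P v x hxinj
        · have hLL : L * L ≤ n := by
            have h1 : L * L ≤ (L + 1) ^ 2 := by nlinarith
            omega
          calc L * (L * (GamD P v * n ^ (L - 1))) = (L * L) * (GamD P v * n ^ (L - 1)) := by ring
          _ ≤ n * (GamD P v * n ^ (L - 1)) := Nat.mul_le_mul_right _ hLL
          _ = GamD P v * n ^ L := by
              have h2 : n ^ L = n * n ^ (L - 1) := by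
                rw [← pow_succ', show L - 1 + 1 = L by omega]
              rw [h2]; ring
          _ ≤ congestion P * n ^ L := Nat.mul_le_mul_right _ (pairs_card_le P v)
    _ = 2 * (congestion P * n ^ L) := by ring
  -- combine in ℝ
  have hNat : n ^ (L + 1) + ∑ j ∈ Finset.Icc 1 L,
      (Npaths P v (x ((j - 1 : ℕ) : Fin (L+1))) * n ^ (L - j) + (L - j) * (GamD P v * n ^ (L - 1 - j)))
        * n ^ j ≤ 3 * (congestion P * n ^ L) := by omega
  calc ∑ q ∈ 𝒵, rvt G P v₁ v (x, b₁) q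
      ≤ (n : ℝ) ^ (L + 1) +
        ∑ j ∈ Finset.Icc 1 L, ((𝒵.filter (condD P v x b₁ j)).card : ℝ) * (n : ℝ) ^ j := hstep
  _ ≤ (n : ℝ) ^ (L + 1) + ∑ j ∈ Finset.Icc 1 L,
        ((Npaths P v (x ((j - 1 : ℕ) : Fin (L+1))) * n ^ (L - j) +
          (L - j) * (GamD P v * n ^ (L - 1 - j)) : ℕ) : ℝ) * (n : ℝ) ^ j := by
      apply add_le_add_right
      apply Finset.sum_le_sum
      intro j hj
      rw [Finset.mem_Icc] at hj
      have := hcard_j j hj.1 hj.2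
      have hc : ((𝒵.filter (condD P v x b₁ j)).card : ℝ) ≤
          ((Npaths P v (x ((j - 1 : ℕ) : Fin (L+1))) * n ^ (L - j) +
            (L - j) * (GamD P v * n ^ (L - 1 - j)) : ℕ) : ℝ) := by exact_mod_cast this
      exact mul_le_mul_of_nonneg_right hc (by positivity)
  _ = ((n ^ (L + 1) + ∑ j ∈ Finset.Icc 1 L,
        (Npaths P v (x ((j - 1 : ℕ) : Fin (L+1))) * n ^ (L - j) +
          (L - j) * (GamD P v * n ^ (L - 1 - j))) * n ^ j : ℕ) : ℝ) := by
      push_cast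
      ring
  _ ≤ ((3 * (congestion P * n ^ L) : ℕ) : ℝ) := by exact_mod_cast hNat
  _ = 3 * (congestion P : ℝ) * (n : ℝ) ^ L := by push_cast; ring
end

/-- Assume `(L+1)² ≤ n`, and let `g` be the vertex congestion of `𝒫`.
Then for every vertex `v ∈ V` and every finite set `𝒵` of pairs `(x, b)` with
`b ∈ {0,1}` and `x ∈ {1} × [n]^L` good:
`Σ_{P₁ ∈ 𝒵} Σ_{P₂ ∈ 𝒵} r_v(P₁, P₂) ≤ 6 · g · n^L · |𝒵|`. -/
theorem stmt16 (hn : 0 < n) (hL : 0 < L) (hLn : (L + 1) ^ 2 ≤ n)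
    (G : SimpleGraph (Fin n)) (hconn : G.Connected)
    (P : Fin n → Fin n → List (Fin n))
    (hhead : ∀ u v, (P u v).head? = some u)
    (hlast : ∀ u v, (P u v).getLast? = some v)
    (hchain : ∀ u v, (P u v).Chain' G.Adj)
    (hnodup : ∀ u v, (P u v).Nodup)
    (hself : ∀ u, P u u = [u])
    (v : Fin n)
    (𝒵 : Finset ((Fin (L + 1) → Fin n) × Bool))
    (h𝒵 : ∀ p ∈ 𝒵, p.1 0 = (⟨0, hn⟩ : Fin n) ∧ Function.Injective p.1) :
    ∑ p₁ ∈ 𝒵, ∑ p₂ ∈ 𝒵, rv G P ⟨0, hn⟩ v p₁ p₂ ≤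
      6 * (congestion P : ℝ) * (n : ℝ) ^ L * (𝒵.card : ℝ) := by
  classical
  set v₁ : Fin n := ⟨0, hn⟩ with hv₁
  have hsym : ∀ p q : (Fin (L + 1) → Fin n) × Bool,
      rv G P v₁ v p q ≤ rvt G P v₁ v p q + rvt G P v₁ v q p := by
    intro p q
    rcases le_or_gt ((staircase P p.1).count v) ((staircase P q.1).count v) with h | h
    · have h1 : rvt G P v₁ v p q = rv G P v₁ v p q := by rw [rvt, if_pos h]
      have h2 := rvt_nonneg G P v₁ v q p
      linarith
    · have h1 : rvt G P v₁ v q p = rv G P v₁ v p q := by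
        rw [rvt, if_pos (le_of_lt h), rv_comm]
      have h2 := rvt_nonneg G P v₁ v p q
      linarith
  calc ∑ p₁ ∈ 𝒵, ∑ p₂ ∈ 𝒵, rv G P v₁ v p₁ p₂
      ≤ ∑ p₁ ∈ 𝒵, ∑ p₂ ∈ 𝒵, (rvt G P v₁ v p₁ p₂ + rvt G P v₁ v p₂ p₁) :=
        Finset.sum_le_sum fun p _ => Finset.sum_le_sum fun q _ => hsym p q
  _ = (∑ p₁ ∈ 𝒵, ∑ p₂ ∈ 𝒵, rvt G P v₁ v p₁ p₂) +
        ∑ p₁ ∈ 𝒵, ∑ p₂ ∈ 𝒵, rvt G P v₁ v p₂ p₁ := by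
      simp [Finset.sum_add_distrib]
  _ = 2 * ∑ p₁ ∈ 𝒵, ∑ p₂ ∈ 𝒵, rvt G P v₁ v p₁ p₂ := by
      rw [Finset.sum_comm (s := 𝒵) (t := 𝒵) (f := fun p₁ p₂ => rvt G P v₁ v p₂ p₁)]
      ring
  _ ≤ 2 * ∑ _p₁ ∈ 𝒵, (3 * (congestion P : ℝ) * (n : ℝ) ^ L) := by
      have hin := Finset.sum_le_sum (s := 𝒵)
        (fun p hp => key_bound hn hL hLn G P hhead hlast v v₁ 𝒵 h𝒵 p hp)
      linarith
  _ = 6 * (congestion P : ℝ) * (n : ℝ) ^ L * (𝒵.card : ℝ) := by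
      rw [Finset.sum_const, nsmul_eq_mul]
      ring
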